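/- Let J_n ∈ 𝒥_n with Im a_n ≠ 0. Then the characteristic polynomial satisfies χ_n(λ) = p(λ) − i (Im a_n) χ_{n−1}(λ), where p is a polynomial with real coefficients and χ_{n−1} is the (real-rooted) characteristic polynomial of J_{n−1}. In particular χ_n(μ_k) ∈ ℝ for every eigenvalue μ_k of J_{n−1}. -/

import Mathlib

open Polynomial Matrix Finset

noncomputable section

/-- The corner-bordered complex Jacobi matrix of the class `𝒥_n`: real diagonal
entries `c 0, …, c (n−2)`, complex entry `a` at position `(n−1, n−1)`, superdiagonal
entries `b 0, …, b (n−2)` with their conjugates on the subdiagonal, and corner entries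
`conj (b (n−1))` at `(0, n−1)` and `b (n−1)` at `(n−1, 0)`. -/
def cornerJacobi (n : ℕ) (c : ℕ → ℝ) (b : ℕ → ℂ) (a : ℂ) :
    Matrix (Fin n) (Fin n) ℂ :=
  Matrix.of fun i j =>
    if (i : ℕ) = (j : ℕ) then (if (i : ℕ) = n - 1 then a else ((c (i : ℕ) : ℝ) : ℂ))
    else if (i : ℕ) = 0 ∧ (j : ℕ) = n - 1 then (starRingEnd ℂ) (b (n - 1))
    else if (i : ℕ) = n - 1 ∧ (j : ℕ) = 0 then b (n - 1)
    else if (i : ℕ) + 1 = (j : ℕ) then b (i : ℕ)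
    else if (j : ℕ) + 1 = (i : ℕ) then (starRingEnd ℂ) (b (j : ℕ))
    else 0

/-- The leading principal `(n−1)×(n−1)` submatrix of `cornerJacobi n c b a`. -/
def cornerJacobiSub (n : ℕ) (c : ℕ → ℝ) (b : ℕ → ℂ) (a : ℂ) :
    Matrix (Fin (n - 1)) (Fin (n - 1)) ℂ :=
  (cornerJacobi n c b a).submatrix (Fin.castLE (Nat.sub_le n 1)) (Fin.castLE (Nat.sub_le n 1))


lemma charpoly_transpose' {k : ℕ} (M : Matrix (Fin k) (Fin k) ℂ) : Mᵀ.charpoly = M.charpoly := by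
  have h : charmatrix Mᵀ = (charmatrix M)ᵀ := by
    refine Matrix.ext fun i j => ?_
    by_cases hij : i = j
    · subst hij; simp [charmatrix_apply_eq]
    · simp [charmatrix_apply_ne _ _ _ hij, charmatrix_apply_ne _ _ _ (Ne.symm hij),
        Matrix.transpose_apply]
  rw [Matrix.charpoly, Matrix.charpoly, h, det_transpose]

lemma hermitian_charpoly_lift {k : ℕ} {M : Matrix (Fin k) (Fin k) ℂ} (hM : M.IsHermitian) :
    ∃ p : Polynomial ℝ, M.charpoly = p.map Complex.ofRealHom := by
  have hmap : M.map (starRingEnd ℂ) = Mᵀ := by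
    ext i j
    simpa [Matrix.map_apply, transpose_apply] using hM.apply j i
  have h1 : M.charpoly.map (starRingEnd ℂ) = M.charpoly := by
    rw [← Matrix.charpoly_map, hmap, charpoly_transpose']
  have hc : ∀ k : ℕ, M.charpoly.coeff k ∈ Set.range Complex.ofRealHom := by
    intro k
    have := congrArg (fun q => Polynomial.coeff q k) h1
    simp only [Polynomial.coeff_map] at this
    exact ⟨(M.charpoly.coeff k).re, Complex.conj_eq_iff_re.mp this⟩
  obtain ⟨p, hp⟩ := (Polynomial.mem_lifts _).mp
    ((Polynomial.lifts_iff_coeff_lifts _).mpr hc)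
  exact ⟨p, hp.symm⟩

open scoped ComplexOrder in
lemma hermitian_root_real {k : ℕ} {M : Matrix (Fin k) (Fin k) ℂ} (hM : M.IsHermitian)
    {μ : ℂ} (h : M.charpoly.IsRoot μ) : μ.im = 0 := by
  have hdet : (Matrix.diagonal (fun _ : Fin k => μ) - M).det = 0 := by
    have h2 : (Matrix.diagonal (fun _ : Fin k => μ) - M)
        = (charmatrix M).map (Polynomial.evalRingHom μ) := by
      refine Matrix.ext fun i j => ?_
      by_cases hij : i = j
      · subst hij; simp [charmatrix_apply_eq]
      · simp [charmatrix_apply_ne _ _ _ hij, Matrix.diagonal_apply_ne _ hij]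
    have hh := RingHom.map_det (Polynomial.evalRingHom μ) (charmatrix M)
    rw [RingHom.mapMatrix_apply] at hh
    rw [h2, ← hh]
    exact h
  obtain ⟨v, hv0, hv⟩ := (Matrix.exists_mulVec_eq_zero_iff).mpr hdet
  have hMv : M.mulVec v = μ • v := by
    rw [Matrix.sub_mulVec, sub_eq_zero] at hv
    rw [← hv]
    ext i
    simp [Matrix.mulVec_diagonal]
  set t := star v ⬝ᵥ v with ht
  have ht0 : t ≠ 0 := fun h0 => hv0 (dotProduct_star_self_eq_zero.mp h0)
  have htr : star t = t := by
    simp [ht, dotProduct, map_sum, mul_comm]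
  have key : star v ⬝ᵥ M.mulVec v = μ * t := by
    rw [hMv, dotProduct_smul, smul_eq_mul]
  have key2 : star (star v ⬝ᵥ M.mulVec v) = star v ⬝ᵥ M.mulVec v := by
    conv_lhs => rw [Matrix.star_dotProduct, star_star, Matrix.star_mulVec,
      ← Matrix.dotProduct_mulVec, hM.eq]
  rw [key, star_mul', htr] at key2
  have : (starRingEnd ℂ) μ = μ := mul_right_cancel₀ ht0 (by simpa [mul_comm] using key2)
  exact Complex.conj_eq_iff_im.mp this



lemma cornerJacobi_hermitian (m : ℕ) (hm : 2 ≤ m) (c : ℕ → ℝ) (b : ℕ → ℂ) (r : ℝ) :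
    (cornerJacobi (m+1) c b (r:ℂ)).IsHermitian := by
  refine Matrix.ext fun i j => ?_
  simp only [conjTranspose_apply, cornerJacobi, of_apply, Nat.add_sub_cancel]
  have hi := i.isLt
  have hj := j.isLt
  split_ifs
  all_goals try (exfalso; omega)
  all_goals simp only [Complex.star_def, Complex.conj_ofReal, Complex.conj_conj, star_zero]
  all_goals try rfl
  all_goals rw [show (j:ℕ) = (i:ℕ) from by omega]

lemma cornerJacobiSub_hermitian (m : ℕ) (hm : 2 ≤ m) (c : ℕ → ℝ) (b : ℕ → ℂ) (a : ℂ) :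
    (cornerJacobiSub (m+1) c b a).IsHermitian := by
  refine Matrix.ext fun i j => ?_
  simp only [conjTranspose_apply, cornerJacobiSub, cornerJacobi, submatrix_apply, of_apply,
    Nat.add_sub_cancel, Fin.coe_castLE]
  have hi := i.isLt
  have hj := j.isLt
  simp only [Nat.add_sub_cancel] at hi hj
  split_ifs
  all_goals try (exfalso; omega)
  all_goals simp only [Complex.star_def, Complex.conj_ofReal, Complex.conj_conj, star_zero]
  all_goals try rfl
  all_goals rw [show (j:ℕ) = (i:ℕ) from by omega]

lemma key_det (m : ℕ) (hm : 2 ≤ m) (c : ℕ → ℝ) (b : ℕ → ℂ) (a : ℂ) :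
    (cornerJacobi (m+1) c b a).charpoly
      = (cornerJacobi (m+1) c b ((a.re:ℝ):ℂ)).charpoly
        - Polynomial.C (Complex.I * (a.im : ℂ)) * (cornerJacobiSub (m+1) c b a).charpoly := by
  set s : ℂ[X] := -(Polynomial.C (Complex.I * (a.im : ℂ))) with hs
  set B := charmatrix (cornerJacobi (m+1) c b ((a.re:ℝ):ℂ)) with hB
  have hA : charmatrix (cornerJacobi (m+1) c b a)
      = updateRow B (Fin.last m) (B (Fin.last m) + Pi.single (Fin.last m) s) := by
    rw [hB]
    refine Matrix.ext fun i j => ?_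
    by_cases hi : i = Fin.last m
    · subst hi
      rw [updateRow_self]
      by_cases hj : j = Fin.last m
      · subst hj
        simp only [Pi.add_apply, Pi.single_eq_same]
        rw [charmatrix_apply_eq, charmatrix_apply_eq]
        have e1 : (cornerJacobi (m+1) c b a) (Fin.last m) (Fin.last m) = a := by
          simp [cornerJacobi, Fin.val_last]
        have e2 : (cornerJacobi (m+1) c b ((a.re:ℝ):ℂ)) (Fin.last m) (Fin.last m)
            = ((a.re:ℝ):ℂ) := by
          simp [cornerJacobi, Fin.val_last]
        rw [e1, e2, hs]
        have hC : Polynomial.C a = Polynomial.C ((a.re:ℝ):ℂ)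
            + Polynomial.C (Complex.I * (a.im:ℂ)) := by
          rw [← map_add]
          congr 1
          rw [mul_comm]
          exact (Complex.re_add_im a).symm
        rw [hC]
        ring
      · simp only [Pi.add_apply, Pi.single_eq_of_ne hj, add_zero]
        have hj' : (Fin.last m : ℕ) ≠ (j : ℕ) := by
          simp only [Fin.val_last]
          exact fun h => hj (Fin.ext (by simp [Fin.val_last, h.symm]))
        rw [charmatrix_apply_ne _ _ _ (fun h => hj' (congrArg _ h)),
          charmatrix_apply_ne _ _ _ (fun h => hj' (congrArg _ h))]
        simp only [cornerJacobi, of_apply, Nat.add_sub_cancel]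
        rw [if_neg hj', if_neg hj']
    · rw [updateRow_ne hi]
      have hi' : (i:ℕ) ≠ m := by
        intro h; exact hi (Fin.ext (by simp [Fin.val_last, h]))
      rw [charmatrix_apply, charmatrix_apply]
      congr 1
      congr 1
      simp only [cornerJacobi, of_apply, Nat.add_sub_cancel]
      by_cases hij : (i:ℕ) = (j:ℕ)
      · rw [if_pos hij, if_pos hij, if_neg hi', if_neg hi']
      · rw [if_neg hij, if_neg hij]
  have hexp : det (updateRow B (Fin.last m) (Pi.single (Fin.last m) s))
      = s * det (B.submatrix Fin.castSucc Fin.castSucc) := by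
    rw [det_succ_row _ (Fin.last m), Finset.sum_eq_single (Fin.last m)]
    · have hU : (updateRow B (Fin.last m) (Pi.single (Fin.last m) s)).submatrix
          Fin.castSucc Fin.castSucc = B.submatrix Fin.castSucc Fin.castSucc := by
        refine Matrix.ext fun i j => ?_
        simp [submatrix_apply, updateRow_ne (Fin.castSucc_lt_last i).ne]
      rw [Fin.succAbove_last, hU, updateRow_self, Pi.single_eq_same, Fin.val_last]
      have h1 : ((-1 : ℂ[X])) ^ (m + m) = 1 := by
        rw [← two_mul, pow_mul]; simp
      rw [h1, one_mul]
    · intro j _ hj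
      rw [updateRow_self, Pi.single_eq_of_ne hj]
      ring
    · simp
  have hsub : B.submatrix Fin.castSucc Fin.castSucc
      = charmatrix (cornerJacobiSub (m+1) c b a) := by
    rw [hB]
    refine Matrix.ext fun i j => ?_
    rw [submatrix_apply, charmatrix_apply, charmatrix_apply]
    have hij : Fin.castSucc i = Fin.castSucc j ↔ i = j := ⟨fun h => by
      exact Fin.ext (by simpa using congrArg Fin.val h), fun h => by rw [h]⟩
    have hi := i.isLt
    by_cases h : i = j
    · subst h
      congr 1
      · simp [Matrix.diagonal]
      · congr 1
        simp only [cornerJacobiSub, cornerJacobi, submatrix_apply, of_apply, Fin.coe_castLE,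
          Fin.coe_castSucc, Nat.add_sub_cancel]
        split_ifs <;> first | rfl | omega
    · have h' : Fin.castSucc i ≠ Fin.castSucc j := fun hh => h (hij.mp hh)
      congr 1
      · rw [Matrix.diagonal_apply_ne _ h', Matrix.diagonal_apply_ne _ h]
      · congr 1
        have hij' : (i:ℕ) ≠ (j:ℕ) := fun hh => h (Fin.ext hh)
        simp only [cornerJacobiSub, cornerJacobi, submatrix_apply, of_apply, Fin.coe_castLE,
          Fin.coe_castSucc, Nat.add_sub_cancel]
        split_ifs <;> first | rfl | omega
  rw [Matrix.charpoly, hA, det_updateRow_add, updateRow_eq_self, hexp, hsub]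
  rw [Matrix.charpoly, Matrix.charpoly, hs]
  ring_nf
  rw [hB]; ring

/-- if `Im a_n ≠ 0`, then `χ_n(λ) = p(λ) − i (Im a_n) χ_{n−1}(λ)` for
some real polynomial `p`; in particular `χ_n(μ) ∈ ℝ` for every eigenvalue `μ` of
`J_{n−1}`. -/
theorem stmt13 (n : ℕ) (hn : 3 ≤ n) (c : ℕ → ℝ) (b : ℕ → ℂ) (a : ℂ)
    (hb : ∀ k : ℕ, k < n → b k ≠ 0)
    (ha : a.im ≠ 0) :
    (∃ p : Polynomial ℝ,
      (cornerJacobi n c b a).charpoly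
        = p.map Complex.ofRealHom
            - Polynomial.C (Complex.I * (a.im : ℂ)) * (cornerJacobiSub n c b a).charpoly) ∧
    ∀ μ : ℂ, (cornerJacobiSub n c b a).charpoly.IsRoot μ →
      ((cornerJacobi n c b a).charpoly.eval μ).im = 0 := by
  obtain ⟨m, rfl⟩ : ∃ m, n = m + 1 := ⟨n - 1, by omega⟩
  have hm : 2 ≤ m := by omega
  have hkey := key_det m hm c b a
  obtain ⟨p, hp⟩ := hermitian_charpoly_lift (cornerJacobi_hermitian m hm c b a.re)
  rw [hp] at hkey
  refine ⟨⟨p, hkey⟩, ?_⟩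
  intro μ hroot
  have him : μ.im = 0 := hermitian_root_real (cornerJacobiSub_hermitian m hm c b a) hroot
  rw [Polynomial.IsRoot] at hroot
  rw [hkey, Polynomial.eval_sub, Polynomial.eval_mul, Polynomial.eval_C, hroot, mul_zero,
    sub_zero]
  have hμ : μ = Complex.ofRealHom μ.re := Complex.ext rfl (by simpa using him)
  rw [hμ, Polynomial.eval_map, Polynomial.eval₂_at_apply]
  simp
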